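/- Let (S,·) be a monoid with identity element e and let ⊙ be an associative binary operation on S satisfying the left e-join law e⊙(x·y) = e⊙(x⊙y) for all x,y ∈ S. Then the map J_e(x) = e⊙x is e-periodic (e⊙(x·e) = e⊙(e·x) = e⊙x for all x) and for all x,y ∈ S the following chain of equalities holds: e⊙(x·y) = e⊙(x⊙y) = (e⊙x)⊙(e⊙y) = e⊙((e⊙x)·y) = e⊙(x·(e⊙y)) = e⊙((e⊙x)⊙y) = e⊙(x⊙(e⊙y)). -/
import Mathlib


/-- Let `(S, ·)` be a monoid with identity `e = 1` and `⊙` an associative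
operation satisfying the left `e`-join law (a left monoid-`e`-semigroup). Then the map
`J_e x = e ⊙ x` is `e`-periodic, and for all `x, y` the chain of equalities
`e⊙(x·y) = e⊙(x⊙y) = (e⊙x)⊙(e⊙y) = e⊙((e⊙x)·y) = e⊙(x·(e⊙y)) = e⊙((e⊙x)⊙y)
= e⊙(x⊙(e⊙y))` holds. -/
theorem stmt_11 {S : Type*} [Monoid S] (op : S → S → S)
    (hassoc : ∀ x y z : S, op (op x y) z = op x (op y z))
    (hjoin : ∀ x y : S, op 1 (x * y) = op 1 (op x y)) :
    (∀ x : S, op 1 (x * 1) = op 1 x ∧ op 1 (1 * x) = op 1 x) ∧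
    (∀ x y : S,
      op 1 (x * y) = op 1 (op x y) ∧
      op 1 (op x y) = op (op 1 x) (op 1 y) ∧
      op (op 1 x) (op 1 y) = op 1 ((op 1 x) * y) ∧
      op 1 ((op 1 x) * y) = op 1 (x * (op 1 y)) ∧
      op 1 (x * (op 1 y)) = op 1 (op (op 1 x) y) ∧
      op 1 (op (op 1 x) y) = op 1 (op x (op 1 y))) := by
  have h1 : ∀ x : S, op 1 (op 1 x) = op 1 x := fun x => by
    rw [← hjoin, one_mul]
  have h2 : ∀ x : S, op (op 1 x) 1 = op 1 x := fun x => by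
    rw [hassoc, ← hjoin, mul_one]
  have key : ∀ x y : S, op (op 1 x) (op 1 y) = op (op 1 x) y := fun x y => by
    rw [← hassoc, h2]
  have L : ∀ a b : S, op 1 (op a b) = op (op 1 a) b := fun a b => (hassoc 1 a b).symm
  have M : ∀ a b : S, op 1 (a * b) = op (op 1 a) b := fun a b => (hjoin a b).trans (L a b)
  refine ⟨fun x => ⟨by rw [mul_one], by rw [one_mul]⟩, fun x y => ?_⟩
  refine ⟨hjoin x y, ?_, ?_, ?_, ?_, ?_⟩
  · rw [key, L]
  · rw [key, M, h1]
  · rw [M, M, h1, key]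
  · rw [M, key, L, h1]
  · rw [L, h1, L, key]
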